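/- Let K be a field, m ≥ 1 an integer, and φ : K[x,y] → K[t] the K-algebra homomorphism with φ(x) = t² and φ(y) = t^{2m+1}. Then the preimage under φ of the ideal (t^{2m}) is the ideal (y, x^m) of K[x,y], and the preimage under φ of the ideal (t^{2m+2}) is the ideal (y², xy, x^{m+1}) of K[x,y]. -/

import Mathlib

open MvPolynomial

noncomputable section

/-- The coefficient `a_i` of `s^(n-i) t^i` in a binary form `f` of degree `n`. -/
def bcoeff {K : Type*} [Field K] (n : ℕ) (f : MvPolynomial (Fin 2) K) (i : Fin (n + 1)) : K :=
  MvPolynomial.coeff (Finsupp.single 0 (n - (i : ℕ)) + Finsupp.single 1 (i : ℕ)) f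

/-- The binary form of degree `k` with coefficient vector `x`. -/
def formOf {K : Type*} [Field K] (k : ℕ) (x : Fin (k + 1) → K) : MvPolynomial (Fin 2) K :=
  ∑ i : Fin (k + 1),
    MvPolynomial.C (x i) * MvPolynomial.X 0 ^ (k - (i : ℕ)) * MvPolynomial.X 1 ^ (i : ℕ)

/-- The matrix `M_k` associated to the parameterization `f`: the first `n-k+1` rows contain
the variables `x_0, …, x_k` in staircase position, the last three rows are the coefficient
vectors of `f_0, f_1, f_2`. -/
def Mmat {K : Type*} [Field K] (n k : ℕ) (f : Fin 3 → MvPolynomial (Fin 2) K) :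
    Matrix (Fin (n - k + 4)) (Fin (n + 1)) (MvPolynomial (Fin (k + 1)) K) :=
  fun j c =>
    if hj : (j : ℕ) ≤ n - k then
      if h : (j : ℕ) ≤ (c : ℕ) ∧ (c : ℕ) ≤ (j : ℕ) + k then
        MvPolynomial.X ⟨(c : ℕ) - (j : ℕ), by omega⟩
      else 0
    else
      MvPolynomial.C (bcoeff n (f ⟨(j : ℕ) - (n - k + 1), by have := j.isLt; omega⟩) c)

/-- The set of `(n-k+3) × (n-k+3)` minors of the matrix `M_k`; it generates the ideal
`I_{X_k}`. -/
def minorsSet {K : Type*} [Field K] (n k : ℕ) (f : Fin 3 → MvPolynomial (Fin 2) K) :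
    Set (MvPolynomial (Fin (k + 1)) K) :=
  { g | ∃ (r : Fin (n - k + 3) → Fin (n - k + 4)) (c : Fin (n - k + 3) → Fin (n + 1)),
      Function.Injective r ∧ Function.Injective c ∧
      g = ((Mmat n k f).submatrix r c).det }

/-- The projective zero locus `X_k(K) ⊆ ℙ^k(K)` of the ideal of minors of `M_k`. -/
def XkSet {K : Type*} [Field K] (n k : ℕ) (f : Fin 3 → MvPolynomial (Fin 2) K) :
    Set (Projectivization K (Fin (k + 1) → K)) :=
  { P | ∀ g ∈ minorsSet n k f, MvPolynomial.eval P.rep g = 0 }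

/-- Evaluation of the parameterization at a vector `v ∈ K²`. -/
def evalVec {K : Type*} [Field K] (f : Fin 3 → MvPolynomial (Fin 2) K) (v : Fin 2 → K) :
    Fin 3 → K :=
  fun u => MvPolynomial.eval v (f u)

/-- The induced map `f : ℙ¹(K) → ℙ²(K)` (with a junk value where undefined). -/
def projMap {K : Type*} [Field K] (f : Fin 3 → MvPolynomial (Fin 2) K)
    (P : Projectivization K (Fin 2 → K)) : Projectivization K (Fin 3 → K) :=
  haveI := Classical.propDecidable (evalVec f P.rep ≠ 0)
  if h : evalVec f P.rep ≠ 0 then Projectivization.mk K _ h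
  else Projectivization.mk K (fun _ => 1) (fun hc => one_ne_zero (congrFun hc 0))

/-- `f = (f_0, f_1, f_2)` is a proper parameterization of degree `n`: the `f_u` are
homogeneous of degree `n`, have no common zero outside the origin, and the induced map
`ℙ¹(K) → ℙ²(K)` is injective outside some finite set. -/
structure IsProperParam {K : Type*} [Field K] (n : ℕ)
    (f : Fin 3 → MvPolynomial (Fin 2) K) : Prop where
  homog : ∀ u, (f u).IsHomogeneous n
  no_common_zero : ∀ v : Fin 2 → K, v ≠ 0 → evalVec f v ≠ 0
  gen_injective : ∃ S : Set (Projectivization K (Fin 2 → K)), S.Finite ∧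
    Set.InjOn (projMap f) Sᶜ

/-- The homogeneous vanishing ideal of the point `p ∈ ℙ²(K)`. -/
def pointIdeal {K : Type*} [Field K] (p : Fin 3 → K) : Ideal (MvPolynomial (Fin 3) K) :=
  Ideal.span { L | L.IsHomogeneous 1 ∧ MvPolynomial.eval p L = 0 }

/-- The multiplicity of the curve `{F = 0}` at the point `p`:
the largest `m` with `F ∈ I(p)^m`. -/
def multAt {K : Type*} [Field K] (F : MvPolynomial (Fin 3) K) (p : Fin 3 → K) : ℕ :=
  sSup { m | F ∈ pointIdeal p ^ m }

/-- The cross difference `p_i f_j - p_j f_i`. -/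
def crossDiff {K : Type*} [Field K] (f : Fin 3 → MvPolynomial (Fin 2) K) (p : Fin 3 → K)
    (i j : Fin 3) : MvPolynomial (Fin 2) K :=
  MvPolynomial.C (p i) * f j - MvPolynomial.C (p j) * f i

/-- `G` is a greatest common divisor of the three cross differences `p_i f_j - p_j f_i`,
`0 ≤ i < j ≤ 2`. -/
def IsGcdOfCross {K : Type*} [Field K] (f : Fin 3 → MvPolynomial (Fin 2) K) (p : Fin 3 → K)
    (G : MvPolynomial (Fin 2) K) : Prop :=
  (∀ i j : Fin 3, i < j → G ∣ crossDiff f p i j) ∧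
  (∀ D : MvPolynomial (Fin 2) K, (∀ i j : Fin 3, i < j → D ∣ crossDiff f p i j) → D ∣ G)

/-- The linear binary form with root `v = (v 0 : v 1)`. -/
def linFormOf {K : Type*} [Field K] (v : Fin 2 → K) : MvPolynomial (Fin 2) K :=
  MvPolynomial.C (v 1) * MvPolynomial.X 0 - MvPolynomial.C (v 0) * MvPolynomial.X 1

/-- The multiplicity of `v` as a root of the binary form `h`. -/
def ordAt {K : Type*} [Field K] (v : Fin 2 → K) (h : MvPolynomial (Fin 2) K) : ℕ :=
  sSup { e | linFormOf v ^ e ∣ h }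

/-- The point `x ∈ ℙ²` lies on the conic `4 x₀ x₂ - x₁² = 0`. -/
def onConic {K : Type*} [Field K] (x : Fin 3 → K) : Prop :=
  4 * x 0 * x 2 - x 1 ^ 2 = 0



section Aux
variable {K : Type*} [Field K] (m : ℕ)

/-- The exponent map -/
def expOf (m : ℕ) (d : Fin 2 →₀ ℕ) : ℕ := 2 * d 0 + (2 * m + 1) * d 1

lemma finsupp_fin2_ext {d e : Fin 2 →₀ ℕ} (h0 : d 0 = e 0) (h1 : d 1 = e 1) : d = e := by
  ext i; fin_cases i <;> assumption

lemma phi_eq (φ : MvPolynomial (Fin 2) K →ₐ[K] Polynomial K)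
    (hx : φ (MvPolynomial.X 0) = Polynomial.X ^ 2)
    (hy : φ (MvPolynomial.X 1) = Polynomial.X ^ (2 * m + 1))
    (p : MvPolynomial (Fin 2) K) :
    φ p = MvPolynomial.eval₂ (algebraMap K (Polynomial K))
      (fun i : Fin 2 => if i = 0 then Polynomial.X ^ 2 else Polynomial.X ^ (2 * m + 1)) p := by
  have : φ = MvPolynomial.aeval (fun i : Fin 2 =>
      if i = 0 then (Polynomial.X : Polynomial K) ^ 2 else Polynomial.X ^ (2 * m + 1)) := by
    apply MvPolynomial.algHom_ext
    intro i; fin_cases i <;> simp [hx, hy]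
  rw [this, MvPolynomial.aeval_def]

lemma coeff_phi (φ : MvPolynomial (Fin 2) K →ₐ[K] Polynomial K)
    (hx : φ (MvPolynomial.X 0) = Polynomial.X ^ 2)
    (hy : φ (MvPolynomial.X 1) = Polynomial.X ^ (2 * m + 1))
    (p : MvPolynomial (Fin 2) K) (j : ℕ) :
    (φ p).coeff j = ∑ d ∈ p.support, if expOf m d = j then p.coeff d else 0 := by
  rw [phi_eq m φ hx hy, MvPolynomial.eval₂_eq', Polynomial.finset_sum_coeff]
  apply Finset.sum_congr rfl
  intro d _
  rw [Fin.prod_univ_two]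
  rw [show (if (0:Fin 2) = 0 then (Polynomial.X:Polynomial K) ^ 2 else Polynomial.X ^ (2*m+1)) = Polynomial.X ^ 2 from if_pos rfl,
      show (if (1:Fin 2) = 0 then (Polynomial.X:Polynomial K) ^ 2 else Polynomial.X ^ (2*m+1)) = Polynomial.X ^ (2*m+1) from if_neg (by decide)]
  rw [← pow_mul, ← pow_mul, ← pow_add]
  rw [Polynomial.algebraMap_eq, Polynomial.coeff_C_mul, Polynomial.coeff_X_pow]
  simp only [expOf, mul_comm (d 0) 2, mul_comm (d 1) (2*m+1)]
  by_cases h : 2 * d 0 + (2 * m + 1) * d 1 = j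
  · rw [if_pos h.symm, mul_one]; exact (if_pos h).symm
  · rw [if_neg (fun hc => h hc.symm), mul_zero]; exact (if_neg h).symm

lemma coeff_phi_unique (φ : MvPolynomial (Fin 2) K →ₐ[K] Polynomial K)
    (hx : φ (MvPolynomial.X 0) = Polynomial.X ^ 2)
    (hy : φ (MvPolynomial.X 1) = Polynomial.X ^ (2 * m + 1))
    (p : MvPolynomial (Fin 2) K) (e : Fin 2 →₀ ℕ)
    (he : ∀ d : Fin 2 →₀ ℕ, expOf m d = expOf m e → d = e) :
    (φ p).coeff (expOf m e) = p.coeff e := by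
  rw [coeff_phi m φ hx hy]
  by_cases h : e ∈ p.support
  · rw [Finset.sum_eq_single_of_mem e h (fun d _ hne => if_neg (fun hc => hne (he d hc)))]
    rw [if_pos rfl]
  · rw [MvPolynomial.notMem_support_iff.mp h]
    apply Finset.sum_eq_zero
    intro d hd
    by_cases hc : expOf m d = expOf m e
    · exact absurd (he d hc ▸ hd) h
    · exact if_neg hc

lemma exp_unique_even (a : ℕ) (ha : a ≤ m) (d : Fin 2 →₀ ℕ)
    (h : expOf m d = expOf m (Finsupp.single 0 a)) : d = Finsupp.single 0 a := by
  simp only [expOf, Finsupp.single_apply] at h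
  simp only [show ((0:Fin 2) = 0) = True from by simp, show ((0:Fin 2) = 1) = False from by simp] at h
  simp only [if_true, if_false, mul_zero, add_zero] at h
  have h1 : d 1 = 0 := by
    by_contra hne
    have : 2 * m + 1 ≤ (2 * m + 1) * d 1 := Nat.le_mul_of_pos_right _ (Nat.pos_of_ne_zero hne)
    omega
  rw [h1] at h
  apply finsupp_fin2_ext <;> simp [Finsupp.single_apply, h1] <;> omega

lemma exp_unique_odd (d : Fin 2 →₀ ℕ)
    (h : expOf m d = expOf m (Finsupp.single 1 1)) : d = Finsupp.single 1 1 := by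
  simp only [expOf, Finsupp.single_apply] at h
  simp only [show ((1:Fin 2) = 0) = False from by simp, show ((1:Fin 2) = 1) = True from by simp] at h
  simp only [if_true, if_false, mul_zero, mul_one, zero_add] at h
  have h1 : d 1 = 1 := by
    rcases Nat.lt_or_ge (d 1) 2 with h2 | h2
    · interval_cases h' : d 1 <;> omega
    · have : (2 * m + 1) * 2 ≤ (2 * m + 1) * d 1 := Nat.mul_le_mul_left _ h2
      omega
  rw [h1] at h
  apply finsupp_fin2_ext <;> simp [Finsupp.single_apply, h1] <;> omega


end Aux

lemma le_cross {d : Fin 2 →₀ ℕ} :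
    (Finsupp.single 0 1 + Finsupp.single 1 1 : Fin 2 →₀ ℕ) ≤ d ↔ 1 ≤ d 0 ∧ 1 ≤ d 1 := by
  constructor
  · intro h
    exact ⟨by simpa [Finsupp.single_apply] using h 0, by simpa [Finsupp.single_apply] using h 1⟩
  · rintro ⟨h0, h1⟩ i
    fin_cases i <;> simp [Finsupp.single_apply] <;> omega


/-- Let `φ : K[x,y] → K[t]` be the `K`-algebra homomorphism with `φ(x) = t²` and
`φ(y) = t^{2m+1}`. Then `φ⁻¹((t^{2m})) = (y, x^m)` and `φ⁻¹((t^{2m+2})) = (y², xy, x^{m+1})`. -/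
theorem statement_13 {K : Type*} [Field K] (m : ℕ) (hm : 1 ≤ m)
    (φ : MvPolynomial (Fin 2) K →ₐ[K] Polynomial K)
    (hx : φ (MvPolynomial.X 0) = Polynomial.X ^ 2)
    (hy : φ (MvPolynomial.X 1) = Polynomial.X ^ (2 * m + 1)) :
    Ideal.comap φ (Ideal.span {(Polynomial.X : Polynomial K) ^ (2 * m)}) =
      Ideal.span {(MvPolynomial.X 1 : MvPolynomial (Fin 2) K), MvPolynomial.X 0 ^ m} ∧
    Ideal.comap φ (Ideal.span {(Polynomial.X : Polynomial K) ^ (2 * m + 2)}) =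
      Ideal.span {(MvPolynomial.X 1 : MvPolynomial (Fin 2) K) ^ 2,
        MvPolynomial.X 0 * MvPolynomial.X 1, MvPolynomial.X 0 ^ (m + 1)} := by
  have hX1 : (MvPolynomial.X 1 : MvPolynomial (Fin 2) K) =
      monomial (Finsupp.single 1 1) 1 := by
    rw [← pow_one (MvPolynomial.X 1), X_pow_eq_monomial]
  have hX0m : (MvPolynomial.X 0 : MvPolynomial (Fin 2) K) ^ m =
      monomial (Finsupp.single 0 m) 1 := X_pow_eq_monomial
  have hX12 : (MvPolynomial.X 1 : MvPolynomial (Fin 2) K) ^ 2 =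
      monomial (Finsupp.single 1 2) 1 := X_pow_eq_monomial
  have hX01 : (MvPolynomial.X 0 : MvPolynomial (Fin 2) K) * MvPolynomial.X 1 =
      monomial (Finsupp.single 0 1 + Finsupp.single 1 1) 1 := by
    rw [← pow_one (MvPolynomial.X 0), ← pow_one (MvPolynomial.X 1), X_pow_eq_monomial,
      X_pow_eq_monomial, monomial_mul, one_mul]
  have hX0m1 : (MvPolynomial.X 0 : MvPolynomial (Fin 2) K) ^ (m + 1) =
      monomial (Finsupp.single 0 (m + 1)) 1 := X_pow_eq_monomial
  constructor
  · apply le_antisymm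
    · intro f hf
      rw [Ideal.mem_comap, Ideal.mem_span_singleton] at hf
      rw [show ({MvPolynomial.X 1, MvPolynomial.X 0 ^ m} : Set (MvPolynomial (Fin 2) K)) =
          (fun s => monomial s (1 : K)) '' {Finsupp.single 1 1, Finsupp.single 0 m} by
        rw [Set.image_insert_eq, Set.image_singleton, hX1, hX0m]]
      rw [mem_ideal_span_monomial_image]
      intro d hd
      by_cases h1 : (1 : ℕ) ≤ d 1
      · exact ⟨Finsupp.single 1 1, Or.inl rfl, Finsupp.single_le_iff.mpr h1⟩
      by_cases h0 : m ≤ d 0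
      · exact ⟨Finsupp.single 0 m, Or.inr rfl, Finsupp.single_le_iff.mpr h0⟩
      exfalso
      have hd_eq : d = Finsupp.single 0 (d 0) :=
        finsupp_fin2_ext (by simp) (by simp [Finsupp.single_apply]; omega)
      have hu := coeff_phi_unique m φ hx hy f (Finsupp.single 0 (d 0))
        (fun e he => exp_unique_even m (d 0) (by omega) e he)
      have hzero : (φ f).coeff (expOf m (Finsupp.single 0 (d 0))) = 0 :=
        Polynomial.X_pow_dvd_iff.mp hf _ (by simp [expOf, Finsupp.single_apply]; omega)
      rw [hu, ← hd_eq] at hzero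
      exact MvPolynomial.mem_support_iff.mp hd hzero
    · rw [Ideal.span_le]
      intro g hg
      simp only [Set.mem_insert_iff, Set.mem_singleton_iff] at hg
      rcases hg with rfl | rfl <;>
        simp only [SetLike.mem_coe, Ideal.mem_comap, Ideal.mem_span_singleton, map_pow, hx, hy]
      · exact pow_dvd_pow _ (by omega)
      · rw [← pow_mul]
  · apply le_antisymm
    · intro f hf
      rw [Ideal.mem_comap, Ideal.mem_span_singleton] at hf
      rw [show ({MvPolynomial.X 1 ^ 2, MvPolynomial.X 0 * MvPolynomial.X 1,
            MvPolynomial.X 0 ^ (m+1)} : Set (MvPolynomial (Fin 2) K)) =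
          (fun s => monomial s (1 : K)) '' {Finsupp.single 1 2,
            Finsupp.single 0 1 + Finsupp.single 1 1, Finsupp.single 0 (m+1)} by
        rw [Set.image_insert_eq, Set.image_insert_eq, Set.image_singleton, hX12, hX01, hX0m1]]
      rw [mem_ideal_span_monomial_image]
      intro d hd
      by_cases h2 : (2 : ℕ) ≤ d 1
      · exact ⟨Finsupp.single 1 2, Or.inl rfl, Finsupp.single_le_iff.mpr h2⟩
      by_cases hc : 1 ≤ d 0 ∧ 1 ≤ d 1
      · exact ⟨Finsupp.single 0 1 + Finsupp.single 1 1, Or.inr (Or.inl rfl), le_cross.mpr hc⟩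
      by_cases h0 : m + 1 ≤ d 0
      · exact ⟨Finsupp.single 0 (m+1), Or.inr (Or.inr rfl), Finsupp.single_le_iff.mpr h0⟩
      exfalso
      rcases Nat.eq_zero_or_pos (d 1) with h1 | h1
      · have hd_eq : d = Finsupp.single 0 (d 0) :=
          finsupp_fin2_ext (by simp) (by simp [Finsupp.single_apply]; omega)
        have hu := coeff_phi_unique m φ hx hy f (Finsupp.single 0 (d 0))
          (fun e he => exp_unique_even m (d 0) (by omega) e he)
        have hzero : (φ f).coeff (expOf m (Finsupp.single 0 (d 0))) = 0 :=
          Polynomial.X_pow_dvd_iff.mp hf _ (by simp [expOf, Finsupp.single_apply]; omega)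
        rw [hu, ← hd_eq] at hzero
        exact MvPolynomial.mem_support_iff.mp hd hzero
      · have hd0 : d 0 = 0 := by omega
        have hd1 : d 1 = 1 := by omega
        have hd_eq : d = Finsupp.single 1 1 :=
          finsupp_fin2_ext (by simp [Finsupp.single_apply, hd0]) (by simp [hd1])
        have hu := coeff_phi_unique m φ hx hy f (Finsupp.single 1 1)
          (fun e he => exp_unique_odd m e he)
        have hzero : (φ f).coeff (expOf m (Finsupp.single 1 1)) = 0 :=
          Polynomial.X_pow_dvd_iff.mp hf _
            (by first
              | (simp [expOf, Finsupp.single_apply]; omega)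
              | simp [expOf, Finsupp.single_apply])
        rw [hu, ← hd_eq] at hzero
        exact MvPolynomial.mem_support_iff.mp hd hzero
    · rw [Ideal.span_le]
      intro g hg
      simp only [Set.mem_insert_iff, Set.mem_singleton_iff] at hg
      rcases hg with rfl | rfl | rfl <;>
        simp only [SetLike.mem_coe, Ideal.mem_comap, Ideal.mem_span_singleton, map_pow, map_mul,
          hx, hy, ← pow_mul, ← pow_add]
      · exact pow_dvd_pow _ (by omega)
      · exact pow_dvd_pow _ (by omega)
      · exact pow_dvd_pow _ (by omega)


end
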